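/- Let (M²,g) be a Riemannian surface and T a symmetric (1,1)-tensor field. Any two of the following conditions imply the remaining ones: (i) div T = 0; (ii) trace T is constant; (iii) grad(trace T) = 2 div T; (iv) T is a Codazzi tensor field. -/

import Mathlib

/-- Abstract model of the `C^∞(M)`-module of (local) vector fields on an
`m`-dimensional Riemannian manifold, equipped with an orthonormal frame `E`,
the Levi-Civita connection `D`, and the derivation action `act` of vector
fields on smooth functions `F`. -/
structure RiemannianFrame (m : ℕ) where
  F : Type
  V : Type
  [instCommRing : CommRing F]
  [instAlgebra : Algebra ℝ F]
  [instAddCommGroup : AddCommGroup V]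
  [instModule : Module F V]
  g : V → V → F
  D : V → V → V
  act : V → F → F
  bracket : V → V → V
  E : Fin m → V
  g_symm : ∀ X Y, g X Y = g Y X
  g_addl : ∀ X Y Z, g (X + Y) Z = g X Z + g Y Z
  g_smull : ∀ (f : F) (X Y : V), g (f • X) Y = f * g X Y
  act_addf : ∀ (X : V) (f h : F), act X (f + h) = act X f + act X h
  act_mulf : ∀ (X : V) (f h : F), act X (f * h) = act X f * h + f * act X h
  act_addX : ∀ (X Y : V) (f : F), act (X + Y) f = act X f + act Y f
  act_smulX : ∀ (f : F) (X : V) (h : F), act (f • X) h = f * act X h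
  act_const : ∀ (X : V) (r : ℝ), act X (algebraMap ℝ F r) = 0
  D_addX : ∀ X Y Z, D (X + Y) Z = D X Z + D Y Z
  D_smulX : ∀ (f : F) (X Y : V), D (f • X) Y = f • D X Y
  D_addY : ∀ X Y Z, D X (Y + Z) = D X Y + D X Z
  D_leibniz : ∀ (X : V) (f : F) (Y : V), D X (f • Y) = act X f • Y + f • D X Y
  metric_compat : ∀ X Y Z, act X (g Y Z) = g (D X Y) Z + g Y (D X Z)
  torsion_free : ∀ X Y, D X Y - D Y X = bracket X Y
  bracket_act : ∀ (X Y : V) (f : F),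
    act (bracket X Y) f = act X (act Y f) - act Y (act X f)
  frame_orthonormal : ∀ i j, g (E i) (E j) = if i = j then 1 else 0
  frame_span : ∀ X, X = ∑ i, g X (E i) • E i

attribute [instance] RiemannianFrame.instCommRing RiemannianFrame.instAlgebra
  RiemannianFrame.instAddCommGroup RiemannianFrame.instModule

namespace RiemannianFrame

variable {m : ℕ} (R : RiemannianFrame m)

/-- The covariant derivative `(∇_X T)(Y)` of a `(1,1)`-tensor field `T`. -/
def covT (T : R.V → R.V) (X Y : R.V) : R.V := R.D X (T Y) - T (R.D X Y)

/-- `T` is a `(1,1)`-tensor field: it is `C^∞(M)`-linear. -/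
def IsTensor (T : R.V → R.V) : Prop :=
  (∀ X Y, T (X + Y) = T X + T Y) ∧ ∀ (f : R.F) (X : R.V), T (f • X) = f • T X

/-- `T` is symmetric with respect to the metric. -/
def IsSymmT (T : R.V → R.V) : Prop := ∀ X Y, R.g (T X) Y = R.g X (T Y)

/-- `T` is a Codazzi tensor field: `(∇_X T)(Y) = (∇_Y T)(X)`. -/
def IsCodazzi (T : R.V → R.V) : Prop := ∀ X Y, R.covT T X Y = R.covT T Y X

/-- The trace of a `(1,1)`-tensor field. -/
def traceT (T : R.V → R.V) : R.F := ∑ i, R.g (T (R.E i)) (R.E i)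

/-- The divergence of a `(1,1)`-tensor field, `div T = Σᵢ (∇_{Eᵢ}T)(Eᵢ)`. -/
def divT (T : R.V → R.V) : R.V := ∑ i, R.covT T (R.E i) (R.E i)

/-- The gradient of a function. -/
def gradF (f : R.F) : R.V := ∑ i, R.act (R.E i) f • R.E i

/-- The divergence of a vector field. -/
def divV (Z : R.V) : R.F := ∑ i, R.g (R.D (R.E i) Z) (R.E i)

/-- The geometric Laplacian `Δ f = -div(grad f)`
(sign convention matching `Δ^R T = -trace ∇²T`). -/
def lapF (f : R.F) : R.F := - R.divV (R.gradF f)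

/-- The pointwise inner product `⟨T,S⟩` of two `(1,1)`-tensor fields. -/
def innerTT (T S : R.V → R.V) : R.F :=
  ∑ i, ∑ j, R.g (T (R.E i)) (R.E j) * R.g (S (R.E i)) (R.E j)

/-- The pointwise squared norm `|T|²`. -/
def normT2 (T : R.V → R.V) : R.F := R.innerTT T T

/-- The pointwise inner product `⟨∇T, ∇S⟩` of the `(0,3)`-tensors `∇T`, `∇S`. -/
def innerNabla (T S : R.V → R.V) : R.F :=
  ∑ i, R.innerTT (fun Y => R.covT T (R.E i) Y) (fun Y => R.covT S (R.E i) Y)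

/-- The pointwise squared norm `|∇T|²`. -/
def normNabla2 (T : R.V → R.V) : R.F := R.innerNabla T T

/-- The second covariant derivative `(∇²T)(X,Y,Z) = (∇_X (∇T))(Y,Z)`. -/
def nabla2 (T : R.V → R.V) (X Y Z : R.V) : R.V :=
  R.D X (R.covT T Y Z) - R.covT T (R.D X Y) Z - R.covT T Y (R.D X Z)

/-- `trace(∇²T)`, as a `(1,1)`-tensor field. -/
def traceNabla2 (T : R.V → R.V) (X : R.V) : R.V := ∑ i, R.nabla2 T (R.E i) (R.E i) X

/-- The rough Laplacian `Δ^R T = -trace ∇²T`. -/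
def roughLap (T : R.V → R.V) (X : R.V) : R.V := - R.traceNabla2 T X

/-- The curvature tensor `R(X,Y)Z = ∇_X∇_Y Z - ∇_Y∇_X Z - ∇_{[X,Y]}Z`. -/
def curv (X Y Z : R.V) : R.V :=
  R.D X (R.D Y Z) - R.D Y (R.D X Z) - R.D (R.bracket X Y) Z

/-- A function is constant iff all its directional derivatives vanish
(`M` is assumed connected). -/
def IsConst (f : R.F) : Prop := ∀ X, R.act X f = 0

end RiemannianFrame

/-- The Gaussian curvature of a surface, `K = ⟨R(E₁,E₂)E₁, E₂⟩`. -/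
def RiemannianFrame.K (R : RiemannianFrame 2) : R.F :=
  R.g (R.curv (R.E 0) (R.E 1) (R.E 0)) (R.E 1)


namespace RiemannianFrame

variable {m : ℕ} (R : RiemannianFrame m)

/-- `fun Y => g Y X` as an additive hom. -/
def gHoml (X : R.V) : R.V →+ R.F :=
  AddMonoidHom.mk' (fun Y => R.g Y X) (fun a b => R.g_addl a b X)

lemma g_addr (X Y Z : R.V) : R.g X (Y + Z) = R.g X Y + R.g X Z := by
  rw [R.g_symm, R.g_addl, R.g_symm Y, R.g_symm Z]

/-- `fun Y => g X Y` as an additive hom. -/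
def gHomr (X : R.V) : R.V →+ R.F :=
  AddMonoidHom.mk' (fun Y => R.g X Y) (fun a b => R.g_addr X a b)

lemma g_smulr (f : R.F) (X Y : R.V) : R.g X (f • Y) = f * R.g X Y := by
  rw [R.g_symm, R.g_smull, R.g_symm]

lemma g_zerol (X : R.V) : R.g 0 X = 0 := by
  simpa using R.g_smull 0 0 X

lemma g_zeror (X : R.V) : R.g X 0 = 0 := by rw [R.g_symm, R.g_zerol]

lemma g_subl (X Y Z : R.V) : R.g (X - Y) Z = R.g X Z - R.g Y Z :=
  map_sub (R.gHoml Z) X Y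

lemma g_suml {ι : Type*} (s : Finset ι) (f : ι → R.V) (X : R.V) :
    R.g (∑ i ∈ s, f i) X = ∑ i ∈ s, R.g (f i) X :=
  map_sum (R.gHoml X) f s

lemma g_sumr {ι : Type*} (s : Finset ι) (f : ι → R.V) (X : R.V) :
    R.g X (∑ i ∈ s, f i) = ∑ i ∈ s, R.g X (f i) :=
  map_sum (R.gHomr X) f s

/-- `act X` as an additive hom on functions. -/
def actHom (X : R.V) : R.F →+ R.F :=
  AddMonoidHom.mk' (R.act X) (R.act_addf X)

/-- `fun X => act X f` as an additive hom on vector fields. -/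
def actHomX (f : R.F) : R.V →+ R.F :=
  AddMonoidHom.mk' (fun X => R.act X f) (fun a b => R.act_addX a b f)

lemma act_sumf {ι : Type*} (s : Finset ι) (f : ι → R.F) (X : R.V) :
    R.act X (∑ i ∈ s, f i) = ∑ i ∈ s, R.act X (f i) :=
  map_sum (R.actHom X) f s

lemma act_sumX {ι : Type*} (s : Finset ι) (f : ι → R.V) (h : R.F) :
    R.act (∑ i ∈ s, f i) h = ∑ i ∈ s, R.act (f i) h :=
  map_sum (R.actHomX h) f s

lemma two_smul_cancel (v : R.V) (h : (2 : R.F) • v = 0) : v = 0 := by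
  have h2 : (2 : R.F) = algebraMap ℝ R.F 2 := by rw [map_ofNat]
  calc v = ((algebraMap ℝ R.F 2⁻¹) * (2 : R.F)) • v := by
        rw [h2, ← map_mul]; norm_num
    _ = (algebraMap ℝ R.F 2⁻¹) • ((2 : R.F) • v) := by rw [mul_smul]
    _ = 0 := by rw [h, smul_zero]

lemma act_g_frame (X : R.V) (i j : Fin m) : R.act X (R.g (R.E i) (R.E j)) = 0 := by
  have h : R.g (R.E i) (R.E j) = algebraMap ℝ R.F (if i = j then 1 else 0) := by
    rw [R.frame_orthonormal]; split <;> simp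
  rw [h, R.act_const]

lemma D_frame_antisymm (X : R.V) (i j : Fin m) :
    R.g (R.D X (R.E i)) (R.E j) + R.g (R.D X (R.E j)) (R.E i) = 0 := by
  have h := R.metric_compat X (R.E i) (R.E j)
  rw [R.act_g_frame] at h
  rw [R.g_symm (R.D X (R.E j)) (R.E i)]
  exact h.symm

lemma expand_g (Z W : R.V) : R.g Z W = ∑ j, R.g W (R.E j) * R.g Z (R.E j) := by
  conv_lhs => rw [R.frame_span W]
  rw [R.g_sumr]
  exact Finset.sum_congr rfl fun j _ => by rw [R.g_smulr]

lemma g_gradF (f : R.F) (j : Fin m) : R.g (R.gradF f) (R.E j) = R.act (R.E j) f := by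
  unfold gradF
  rw [R.g_suml]
  have : ∀ i, R.g (R.act (R.E i) f • R.E i) (R.E j)
      = R.act (R.E i) f * (if i = j then 1 else 0) := fun i => by
    rw [R.g_smull, R.frame_orthonormal]
  rw [Finset.sum_congr rfl fun i _ => this i]
  simp

lemma isConst_iff_grad (f : R.F) : R.IsConst f ↔ R.gradF f = 0 := by
  constructor
  · intro h
    unfold gradF
    refine Finset.sum_eq_zero fun i _ => ?_
    rw [h, zero_smul]
  · intro h X
    have hj : ∀ j, R.act (R.E j) f = 0 := fun j => by
      rw [← R.g_gradF, h, R.g_zerol]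
    conv_lhs => rw [R.frame_span X]
    rw [R.act_sumX]
    refine Finset.sum_eq_zero fun i _ => ?_
    rw [R.act_smulX, hj, mul_zero]

lemma g_divT (T : R.V → R.V) (j : Fin m) :
    R.g (R.divT T) (R.E j) = ∑ i, R.g (R.covT T (R.E i) (R.E i)) (R.E j) := by
  unfold divT
  rw [R.g_suml]

variable {T : R.V → R.V}

lemma gT_comm (hTsymm : R.IsSymmT T) (A B : R.V) : R.g (T A) B = R.g (T B) A := by
  rw [hTsymm, R.g_symm]

lemma covT_addX (hT : R.IsTensor T) (X Y Z : R.V) :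
    R.covT T (X + Y) Z = R.covT T X Z + R.covT T Y Z := by
  unfold covT
  rw [R.D_addX, R.D_addX, hT.1]
  abel

lemma covT_smulX (hT : R.IsTensor T) (f : R.F) (X Y : R.V) :
    R.covT T (f • X) Y = f • R.covT T X Y := by
  unfold covT
  rw [R.D_smulX, R.D_smulX, hT.2, smul_sub]

lemma covT_smulY (hT : R.IsTensor T) (f : R.F) (X Y : R.V) :
    R.covT T X (f • Y) = f • R.covT T X Y := by
  unfold covT
  rw [hT.2, R.D_leibniz, R.D_leibniz, hT.1, hT.2, hT.2, smul_sub]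
  abel

lemma covT_g_symm (hTsymm : R.IsSymmT T) (X Y Z : R.V) :
    R.g (R.covT T X Y) Z = R.g (R.covT T X Z) Y := by
  unfold covT
  rw [R.g_subl, R.g_subl]
  have h1 : R.g (R.D X (T Y)) Z = R.act X (R.g (T Y) Z) - R.g (T Y) (R.D X Z) := by
    rw [R.metric_compat]; ring
  have h2 : R.g (R.D X (T Z)) Y = R.act X (R.g (T Z) Y) - R.g (T Z) (R.D X Y) := by
    rw [R.metric_compat]; ring
  rw [h1, h2, R.gT_comm hTsymm Z Y, R.gT_comm hTsymm (R.D X Z) Y,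
    R.gT_comm hTsymm (R.D X Y) Z]
  ring

lemma act_traceT (hTsymm : R.IsSymmT T) (X : R.V) :
    R.act X (R.traceT T) = ∑ i, R.g (R.covT T X (R.E i)) (R.E i) := by
  unfold traceT
  rw [R.act_sumf]
  have term : ∀ i, R.act X (R.g (T (R.E i)) (R.E i)) =
      R.g (R.covT T X (R.E i)) (R.E i) +
      (R.g (T (R.E i)) (R.D X (R.E i)) + R.g (T (R.E i)) (R.D X (R.E i))) := by
    intro i
    have hc : R.g (R.covT T X (R.E i)) (R.E i)
        = R.g (R.D X (T (R.E i))) (R.E i) - R.g (T (R.D X (R.E i))) (R.E i) := by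
      unfold covT; rw [R.g_subl]
    have hsy : R.g (T (R.D X (R.E i))) (R.E i) = R.g (T (R.E i)) (R.D X (R.E i)) :=
      R.gT_comm hTsymm _ _
    rw [R.metric_compat, hc, hsy]
    ring
  rw [Finset.sum_congr rfl (fun i _ => term i), Finset.sum_add_distrib]
  have eA : (∑ i, R.g (T (R.E i)) (R.D X (R.E i)))
      = ∑ i, ∑ j, R.g (R.D X (R.E i)) (R.E j) * R.g (T (R.E i)) (R.E j) :=
    Finset.sum_congr rfl fun i _ => R.expand_g _ _
  have eB : (∑ i, R.g (T (R.E i)) (R.D X (R.E i)))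
      = ∑ i, ∑ j, R.g (R.D X (R.E j)) (R.E i) * R.g (T (R.E i)) (R.E j) := by
    rw [eA, Finset.sum_comm]
    refine Finset.sum_congr rfl fun i _ => Finset.sum_congr rfl fun j _ => ?_
    rw [R.gT_comm hTsymm (R.E j) (R.E i)]
  have hzero : (∑ i, R.g (T (R.E i)) (R.D X (R.E i)))
      + (∑ i, R.g (T (R.E i)) (R.D X (R.E i))) = 0 := by
    nth_rewrite 1 [eA]
    rw [eB, ← Finset.sum_add_distrib]
    refine Finset.sum_eq_zero fun i _ => ?_
    rw [← Finset.sum_add_distrib]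
    refine Finset.sum_eq_zero fun j _ => ?_
    rw [← add_mul, R.D_frame_antisymm X i j, zero_mul]
  rw [Finset.sum_add_distrib, hzero, add_zero]

lemma covT_expand (hT : R.IsTensor T) (X Y : R.V) :
    R.covT T X Y
      = ∑ k, ∑ l, (R.g X (R.E k) * R.g Y (R.E l)) • R.covT T (R.E k) (R.E l) := by
  have hsumX : ∀ (W : R.V), R.covT T (∑ k, R.g X (R.E k) • R.E k) W
      = ∑ k, R.g X (R.E k) • R.covT T (R.E k) W := by
    intro W
    calc R.covT T (∑ k, R.g X (R.E k) • R.E k) W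
        = ∑ k, R.covT T (R.g X (R.E k) • R.E k) W :=
          map_sum (AddMonoidHom.mk' (fun Z => R.covT T Z W)
            (fun a b => R.covT_addX hT a b W)) _ Finset.univ
      _ = ∑ k, R.g X (R.E k) • R.covT T (R.E k) W :=
          Finset.sum_congr rfl fun k _ => R.covT_smulX hT _ _ _
  have hsumY : ∀ (k : Fin m), R.covT T (R.E k) (∑ l, R.g Y (R.E l) • R.E l)
      = ∑ l, R.g Y (R.E l) • R.covT T (R.E k) (R.E l) := by
    intro k
    have hadd : ∀ a b : R.V, R.covT T (R.E k) (a + b)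
        = R.covT T (R.E k) a + R.covT T (R.E k) b := by
      intro a b
      unfold covT
      rw [hT.1, R.D_addY, R.D_addY, hT.1]
      abel
    calc R.covT T (R.E k) (∑ l, R.g Y (R.E l) • R.E l)
        = ∑ l, R.covT T (R.E k) (R.g Y (R.E l) • R.E l) :=
          map_sum (AddMonoidHom.mk' (fun Z => R.covT T (R.E k) Z) hadd) _ Finset.univ
      _ = ∑ l, R.g Y (R.E l) • R.covT T (R.E k) (R.E l) :=
          Finset.sum_congr rfl fun l _ => R.covT_smulY hT _ _ _
  conv_lhs => rw [R.frame_span X]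
  rw [hsumX]
  conv_lhs => rw [R.frame_span Y]
  rw [Finset.sum_congr rfl fun k _ => congrArg _ (hsumY k)]
  refine Finset.sum_congr rfl fun k _ => ?_
  rw [Finset.smul_sum]
  exact Finset.sum_congr rfl fun l _ => by rw [smul_smul]

end RiemannianFrame

namespace RiemannianFrame

lemma codazzi_iff_div_eq_grad (R : RiemannianFrame 2) {T : R.V → R.V}
    (hT : R.IsTensor T) (hTsymm : R.IsSymmT T) :
    R.IsCodazzi T ↔ R.divT T = R.gradF (R.traceT T) := by
  constructor
  · intro hcod
    have comp : ∀ j, R.g (R.divT T) (R.E j) = R.act (R.E j) (R.traceT T) := by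
      intro j
      rw [R.g_divT, R.act_traceT hTsymm, Fin.sum_univ_two, Fin.sum_univ_two]
      fin_cases j <;> simp only [Fin.zero_eta, Fin.mk_one]
      · rw [R.covT_g_symm hTsymm (R.E 1) (R.E 1) (R.E 0), hcod (R.E 1) (R.E 0)]
      · rw [R.covT_g_symm hTsymm (R.E 0) (R.E 0) (R.E 1), hcod (R.E 0) (R.E 1)]
    have h1 : R.divT T = ∑ j, R.g (R.divT T) (R.E j) • R.E j := R.frame_span _
    rw [h1]
    unfold gradF
    exact Finset.sum_congr rfl fun j _ => by rw [comp j]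
  · intro hdg
    have comp : ∀ j, R.g (R.divT T) (R.E j) = R.act (R.E j) (R.traceT T) := fun j => by
      rw [hdg, R.g_gradF]
    have c0 := comp 0
    have c1 := comp 1
    rw [R.g_divT, R.act_traceT hTsymm, Fin.sum_univ_two, Fin.sum_univ_two] at c0 c1
    have h110 : R.g (R.covT T (R.E 1) (R.E 1)) (R.E 0)
        = R.g (R.covT T (R.E 0) (R.E 1)) (R.E 1) := by
      exact add_left_cancel c0
    have h001 : R.g (R.covT T (R.E 0) (R.E 0)) (R.E 1)
        = R.g (R.covT T (R.E 1) (R.E 0)) (R.E 0) := by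
      exact add_right_cancel c1
    have hW : R.covT T (R.E 0) (R.E 1) = R.covT T (R.E 1) (R.E 0) := by
      have hg0 : R.g (R.covT T (R.E 0) (R.E 1) - R.covT T (R.E 1) (R.E 0)) (R.E 0) = 0 := by
        rw [R.g_subl, R.covT_g_symm hTsymm (R.E 0) (R.E 1) (R.E 0), h001, sub_self]
      have hg1 : R.g (R.covT T (R.E 0) (R.E 1) - R.covT T (R.E 1) (R.E 0)) (R.E 1) = 0 := by
        rw [R.g_subl, R.covT_g_symm hTsymm (R.E 1) (R.E 0) (R.E 1), h110, sub_self]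
      have hs := R.frame_span (R.covT T (R.E 0) (R.E 1) - R.covT T (R.E 1) (R.E 0))
      rw [Fin.sum_univ_two, hg0, hg1, zero_smul, zero_smul, add_zero] at hs
      exact sub_eq_zero.mp hs
    have hframe : ∀ k l : Fin 2, R.covT T (R.E k) (R.E l) = R.covT T (R.E l) (R.E k) := by
      intro k l
      fin_cases k <;> fin_cases l
      · rfl
      · exact hW
      · exact hW.symm
      · rfl
    intro X Y
    rw [R.covT_expand hT X Y, R.covT_expand hT Y X, Finset.sum_comm]
    refine Finset.sum_congr rfl fun k _ => Finset.sum_congr rfl fun l _ => ?_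
    rw [mul_comm, hframe]

end RiemannianFrame


/-- On a surface, for a symmetric `(1,1)`-tensor field `T`, any
two of the following imply the remaining ones: (i) `div T = 0`;
(ii) `trace T` constant; (iii) `grad(trace T) = 2 div T` (holomorphicity of
`⟨T(∂_z),∂_z⟩`); (iv) `T` is Codazzi. -/
theorem stmt16 (R : RiemannianFrame 2) (T : R.V → R.V)
    (hT : R.IsTensor T) (hTsymm : R.IsSymmT T) :
    (R.divT T = 0 ∧ R.IsConst (R.traceT T) →
      R.gradF (R.traceT T) = (2 : R.F) • R.divT T ∧ R.IsCodazzi T) ∧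
    (R.divT T = 0 ∧ R.gradF (R.traceT T) = (2 : R.F) • R.divT T →
      R.IsConst (R.traceT T) ∧ R.IsCodazzi T) ∧
    (R.divT T = 0 ∧ R.IsCodazzi T →
      R.IsConst (R.traceT T) ∧ R.gradF (R.traceT T) = (2 : R.F) • R.divT T) ∧
    (R.IsConst (R.traceT T) ∧ R.gradF (R.traceT T) = (2 : R.F) • R.divT T →
      R.divT T = 0 ∧ R.IsCodazzi T) ∧
    (R.IsConst (R.traceT T) ∧ R.IsCodazzi T →
      R.divT T = 0 ∧ R.gradF (R.traceT T) = (2 : R.F) • R.divT T) ∧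
    (R.gradF (R.traceT T) = (2 : R.F) • R.divT T ∧ R.IsCodazzi T →
      R.divT T = 0 ∧ R.IsConst (R.traceT T)) := by
  have hiff := R.codazzi_iff_div_eq_grad hT hTsymm
  have hconst := R.isConst_iff_grad (R.traceT T)
  refine ⟨?_, ?_, ?_, ?_, ?_, ?_⟩
  · rintro ⟨hdiv, hcst⟩
    have hgr0 := hconst.mp hcst
    exact ⟨by rw [hgr0, hdiv, smul_zero], hiff.mpr (hdiv.trans hgr0.symm)⟩
  · rintro ⟨hdiv, h3⟩
    have hgr0 : R.gradF (R.traceT T) = 0 := by rw [h3, hdiv, smul_zero]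
    exact ⟨hconst.mpr hgr0, hiff.mpr (hdiv.trans hgr0.symm)⟩
  · rintro ⟨hdiv, hcod⟩
    have hgr0 : R.gradF (R.traceT T) = 0 := (hiff.mp hcod).symm.trans hdiv
    exact ⟨hconst.mpr hgr0, by rw [hgr0, hdiv, smul_zero]⟩
  · rintro ⟨hcst, h3⟩
    have hgr0 := hconst.mp hcst
    have hd0 : R.divT T = 0 := R.two_smul_cancel _ (by rw [← h3, hgr0])
    exact ⟨hd0, hiff.mpr (hd0.trans hgr0.symm)⟩
  · rintro ⟨hcst, hcod⟩
    have hgr0 := hconst.mp hcst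
    have hd0 : R.divT T = 0 := (hiff.mp hcod).trans hgr0
    exact ⟨hd0, by rw [hgr0, hd0, smul_zero]⟩
  · rintro ⟨h3, hcod⟩
    have hdg := hiff.mp hcod
    have h2 := hdg.trans h3
    rw [two_smul] at h2
    have hd0 : R.divT T = 0 := left_eq_add.mp h2
    exact ⟨hd0, hconst.mpr (hdg.symm.trans hd0)⟩
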